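/- Soundness of the first-order factoring rule: if an interpretation satisfies (the universal closure of) the clause Γ′ ∪ {ℓ₁,…,ℓₙ} and σ is a unifier of {ℓ₁,…,ℓₙ}, then the interpretation satisfies the clause Γ′σ ∪ {ℓ₁σ}. -/

import Mathlib

/-- First-order terms over variables `V` and function symbols `F`.
Constants are nullary functions. -/
inductive Trm (V F : Type) : Type
  | var : V → Trm V F
  | fn  : F → List (Trm V F) → Trm V F

/-- Substitutions map variables to terms. -/
abbrev Subst (V F : Type) := V → Trm V F

/-- Apply a substitution to a term. -/
def Trm.subst {V F : Type} (σ : Subst V F) : Trm V F → Trm V F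
  | .var x => σ x
  | .fn f ts => .fn f (ts.attach.map (fun ⟨t, _⟩ => t.subst σ))

/-- Free variables of a term. -/
def Trm.fv {V F : Type} : Trm V F → Set V
  | .var x => {x}
  | .fn _ ts => ts.attach.foldr (fun ⟨t, _⟩ s => t.fv ∪ s) ∅

/-- Composition of substitutions: apply `σ` first, then `τ`. -/
def Subst.comp {V F : Type} (σ τ : Subst V F) : Subst V F := fun x => (σ x).subst τ

/-- Atomic formulas. -/
structure Atm (V F P : Type) where
  pred : P
  args : List (Trm V F)

/-- Literals: atoms or negated atoms. -/
inductive Lit (V F P : Type)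
  | pos : Atm V F P → Lit V F P
  | neg : Atm V F P → Lit V F P

def Atm.subst {V F P : Type} (σ : Subst V F) (a : Atm V F P) : Atm V F P :=
  ⟨a.pred, a.args.map (Trm.subst σ)⟩

def Lit.subst {V F P : Type} (σ : Subst V F) : Lit V F P → Lit V F P
  | .pos a => .pos (a.subst σ)
  | .neg a => .neg (a.subst σ)

/-- The complement of a literal. -/
def Lit.compl {V F P : Type} : Lit V F P → Lit V F P
  | .pos a => .neg a
  | .neg a => .pos a

/-- The underlying atom of a literal. -/
def Lit.atom {V F P : Type} : Lit V F P → Atm V F P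
  | .pos a => a
  | .neg a => a

/-- Free variables of a literal. -/
def Lit.fv {V F P : Type} (ℓ : Lit V F P) : Set V :=
  ℓ.atom.args.foldr (fun t s => t.fv ∪ s) ∅

/-- Clauses as sets of literals. -/
abbrev Clause (V F P : Type) := Set (Lit V F P)

def Clause.subst {V F P : Type} (σ : Subst V F) (C : Clause V F P) : Clause V F P :=
  (Lit.subst σ) '' C

/-- Subsumption: `X` subsumes `Y` iff some instance of `X` is included in `Y`. -/
def Subsumes {V F P : Type} (X Y : Clause V F P) : Prop :=
  ∃ σ : Subst V F, Clause.subst σ X ⊆ Y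

/-- A first-order interpretation with domain `D`. -/
structure Interp (F P D : Type) where
  fn : F → List D → D
  pr : P → List D → Prop

/-- Evaluation of a term in an interpretation under a variable assignment. -/
def Trm.eval {V F P D : Type} (I : Interp F P D) (ρ : V → D) : Trm V F → D
  | .var x => ρ x
  | .fn f ts => I.fn f (ts.attach.map (fun ⟨t, _⟩ => t.eval I ρ))

/-- Truth of a literal in an interpretation under a variable assignment. -/
def Lit.eval {V F P D : Type} (I : Interp F P D) (ρ : V → D) : Lit V F P → Prop
  | .pos a => I.pr a.pred (a.args.map (Trm.eval I ρ))
  | .neg a => ¬ I.pr a.pred (a.args.map (Trm.eval I ρ))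

/-- An interpretation satisfies (the universal closure of) a clause:
under every variable assignment some literal of the clause is true. -/
def Sat {V F P D : Type} (I : Interp F P D) (C : Clause V F P) : Prop :=
  ∀ ρ : V → D, ∃ ℓ ∈ C, Lit.eval I ρ ℓ

theorem Trm.eval_subst {V F P D : Type} (I : Interp F P D) (ρ : V → D)
    (σ : Subst V F) (t : Trm V F) :
    Trm.eval I ρ (t.subst σ) = Trm.eval I (fun x => Trm.eval I ρ (σ x)) t := by
  cases t with
  | var x => simp [Trm.subst, Trm.eval]
  | fn f ts =>
    simp only [Trm.subst, Trm.eval, List.attach_map_val, List.map_map]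
    congr 1
    apply List.map_congr_left
    intro t ht
    have := List.sizeOf_lt_of_mem ht
    exact Trm.eval_subst I ρ σ t
termination_by sizeOf t
decreasing_by simp_wf; omega

theorem Lit.eval_subst {V F P D : Type} (I : Interp F P D) (ρ : V → D)
    (σ : Subst V F) (ℓ : Lit V F P) :
    Lit.eval I ρ (ℓ.subst σ) ↔ Lit.eval I (fun x => Trm.eval I ρ (σ x)) ℓ := by
  cases ℓ <;>
    simp only [Lit.subst, Lit.eval, Atm.subst, List.map_map] <;>
    rw [show ∀ (l : List (Trm V F)), l.map (Trm.eval I ρ ∘ Trm.subst σ)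
        = l.map (Trm.eval I (fun x => Trm.eval I ρ (σ x))) from
      fun l => List.map_congr_left fun t _ => Trm.eval_subst I ρ σ t]

/-- Soundness of the first-order factoring rule. -/
theorem factoring_sound {V F P D : Type} (I : Interp F P D)
    (Γ : Clause V F P) (L : Set (Lit V F P)) (hne : L.Nonempty)
    (σ : Subst V F) (hσ : ∀ a ∈ L, ∀ b ∈ L, Lit.subst σ a = Lit.subst σ b)
    (ℓ₁ : Lit V F P) (hℓ₁ : ℓ₁ ∈ L)
    (h : Sat I (Γ ∪ L)) :
    Sat I (Clause.subst σ Γ ∪ {Lit.subst σ ℓ₁}) := by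
  intro ρ
  obtain ⟨ℓ, hmem, hev⟩ := h (fun x => Trm.eval I ρ (σ x))
  cases hmem with
  | inl hΓ =>
    exact ⟨ℓ.subst σ, Or.inl ⟨ℓ, hΓ, rfl⟩, (Lit.eval_subst I ρ σ ℓ).mpr hev⟩
  | inr hL =>
    refine ⟨ℓ₁.subst σ, Or.inr rfl, ?_⟩
    rw [hσ ℓ₁ hℓ₁ ℓ hL]
    exact (Lit.eval_subst I ρ σ ℓ).mpr hev
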